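/- Let (A, ≤, 0, 1) be a finite bounded poset and (T, R) a time frame with R reflexive. For q ∈ A^T define P(q)(s) := Min U({q(t) : t R s}) and the composed operator (P*P)(q)(s) := Min U(⋃{Min U({q(t) : t R v}) : v R s}). Then P(q)(s) ≤₂ (P*P)(q)(s) for all s ∈ T, i.e., every element of (P*P)(q)(s) lies above some element of P(q)(s). -/

import Mathlib

section
variable (A : Type*)

/-- Set of minimal upper bounds. -/
def MinU [PartialOrder A] (S : Set A) : Set A := {a | Minimal (· ∈ upperBounds S) a}

/-- Set of maximal lower bounds. -/
def MaxL [PartialOrder A] (S : Set A) : Set A := {a | Maximal (· ∈ lowerBounds S) a}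

/-- An orthomodular poset: a bounded poset with an antitone involution that is a
complementation, such that orthogonal elements have a join and the orthomodular law holds. -/
structure OMP [PartialOrder A] [BoundedOrder A] where
  compl : A → A
  compl_antitone : ∀ a b : A, a ≤ b → compl b ≤ compl a
  compl_involutive : ∀ a : A, compl (compl a) = a
  sup_compl : ∀ a : A, IsLUB {a, compl a} ⊤
  inf_compl : ∀ a : A, IsGLB {a, compl a} ⊥
  ortho_sup : ∀ a b : A, a ≤ compl b → ∃ c, IsLUB {a, b} c
  oml : ∀ a b m : A, a ≤ b → IsGLB {b, compl a} m → IsLUB {a, m} b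

end

section
variable {A T : Type*} [PartialOrder A]

/-- `B ≤₁ C`: every element of `B` is below some element of `C`. -/
def le1 (B C : Set A) : Prop := ∀ b ∈ B, ∃ c ∈ C, b ≤ c

/-- `B ≤₂ C`: every element of `C` is above some element of `B`. -/
def le2 (B C : Set A) : Prop := ∀ c ∈ C, ∃ b ∈ B, b ≤ c

/-- The tense operator `P(q)(s) := Min U({q(t) : t R s})`. -/
def Pop (R : T → T → Prop) (q : T → A) (s : T) : Set A := MinU A (q '' {t | R t s})

/-- The tense operator `F(q)(s) := Min U({q(t) : s R t})`. -/
def Fop (R : T → T → Prop) (q : T → A) (s : T) : Set A := MinU A (q '' {t | R s t})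

/-- The tense operator `H(q)(s) := Max L({q(t) : t R s})`. -/
def Hop (R : T → T → Prop) (q : T → A) (s : T) : Set A := MaxL A (q '' {t | R t s})

/-- The tense operator `G(q)(s) := Max L({q(t) : s R t})`. -/
def Gop (R : T → T → Prop) (q : T → A) (s : T) : Set A := MaxL A (q '' {t | R s t})

/-- A relation is serial if every element has a predecessor and a successor. -/
def Serial (R : T → T → Prop) : Prop := ∀ s : T, (∃ r, R r s) ∧ (∃ t, R s t)

end

/-- In a finite bounded poset with a reflexive time frame, `P(q)(s) ≤₂ (P*P)(q)(s)`. -/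
theorem stmt_15 {A T : Type*} [PartialOrder A] [BoundedOrder A] [Finite A]
    (R : T → T → Prop) (hR : ∀ t, R t t) (q : T → A) :
    ∀ s : T,
      le2 (MinU A (q '' {t | R t s}))
        (MinU A (⋃ v ∈ {v | R v s}, MinU A (q '' {t | R t v}))) := by
  intro s c hc
  obtain ⟨hcub, hcmin⟩ := hc
  -- c is an upper bound of q '' {t | R t s}
  have hub : c ∈ upperBounds (q '' {t | R t s}) := by
    rintro x ⟨t, ht, rfl⟩
    -- get a minimal upper bound m of q '' {t' | R t' t}
    obtain ⟨m, hmle, hmmin⟩ :=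
      exists_minimal_le_of_wellFoundedLT (P := (· ∈ upperBounds (q '' {t' | R t' t}))) (a := ⊤)
        (fun x _ => le_top)
    have hmem : m ∈ ⋃ v ∈ {v | R v s}, MinU A (q '' {t' | R t' v}) := by
      refine Set.mem_biUnion (show t ∈ {v | R v s} from ht) hmmin
    have hqm : q t ≤ m := hmmin.1 ⟨t, hR t, rfl⟩
    exact hqm.trans (hcub hmem)
  obtain ⟨b, hble, hbmin⟩ := exists_minimal_le_of_wellFoundedLT _ _ hub
  exact ⟨b, hbmin, hble⟩
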